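/- For all positive integers n, the determinant of the n×n Hankel matrix whose (i,j) entry is the Motzkin prefix number MP_{i+j} equals 1. -/

import Mathlib

/- The Motzkin prefix number `MP n`: the number of lattice paths of `n` steps, each step
being `(1,1)`, `(1,0)` or `(1,-1)`, starting at the origin and never going below the
x-axis (arbitrary endpoint). A path is encoded as `f : Fin n → Fin 3`, step `i` having
height change `1 - (f i)`. -/
open scoped Classical in
noncomputable def motzkinPrefix (n : ℕ) : ℕ :=
  (Finset.univ.filter (fun f : Fin n → Fin 3 =>
    ∀ m : ℕ, m ≤ n →
      0 ≤ ∑ i ∈ Finset.univ.filter (fun i : Fin n => (i : ℕ) < m),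
        (1 - ((f i : ℕ) : ℤ)))).card

open Finset

namespace MPaux

open scoped Classical

/-- Extend a path to a `ℕ`-indexed step function. -/
def ext {n : ℕ} (f : Fin n → Fin 3) (k : ℕ) : ℤ :=
  if h : k < n then 1 - ((f ⟨k, h⟩ : ℕ) : ℤ) else 0

lemma ext_le_one {n : ℕ} (f : Fin n → Fin 3) (k : ℕ) : ext f k ≤ 1 := by
  unfold ext; split <;> simp

lemma neg_one_le_ext {n : ℕ} (f : Fin n → Fin 3) (k : ℕ) : -1 ≤ ext f k := by
  unfold ext
  split
  · have : ((f ⟨k, by assumption⟩ : ℕ)) < 3 := (f _).2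
    omega
  · norm_num

lemma ext_eq_zero {n : ℕ} (f : Fin n → Fin 3) {k : ℕ} (h : n ≤ k) : ext f k = 0 := by
  unfold ext; rw [dif_neg (by omega)]

lemma sum_filter_eq (n : ℕ) (f : Fin n → Fin 3) (m : ℕ) :
    ∑ i ∈ Finset.univ.filter (fun i : Fin n => (i : ℕ) < m), (1 - ((f i : ℕ) : ℤ)) =
      ∑ k ∈ Finset.range m, ext f k := by
  rw [← Finset.sum_filter_add_sum_filter_not (Finset.range m) (fun k => k < n) (ext f)]
  have h2 : ∑ k ∈ (Finset.range m).filter (fun k => ¬ k < n), ext f k = 0 :=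
    Finset.sum_eq_zero fun k hk => ext_eq_zero f (by simpa using (Finset.mem_filter.mp hk).2)
  rw [h2, add_zero]
  refine Finset.sum_bij' (fun i _ => (i : ℕ)) (fun k hk => ⟨k, (Finset.mem_filter.mp hk).2⟩) ?_ ?_ ?_ ?_ ?_
  · intro i hi
    simp at hi ⊢
    exact hi
  · intro k hk
    simp at hk ⊢
    exact hk.1
  · intro i hi; rfl
  · intro k hk; rfl
  · intro i hi
    simp [ext, i.2]


lemma sum_ext_le {n : ℕ} (f : Fin n → Fin 3) (m : ℕ) :
    ∑ k ∈ Finset.range m, ext f k ≤ m := by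
  calc ∑ k ∈ Finset.range m, ext f k ≤ ∑ _k ∈ Finset.range m, (1 : ℤ) :=
        Finset.sum_le_sum fun k _ => ext_le_one f k
    _ = m := by simp

lemma sum_ext_stable {n : ℕ} (f : Fin n → Fin 3) {m : ℕ} (h : n ≤ m) :
    ∑ k ∈ Finset.range m, ext f k = ∑ k ∈ Finset.range n, ext f k := by
  refine (Finset.sum_subset (Finset.range_subset_range.mpr h) ?_).symm
  intro k _ hk
  exact ext_eq_zero f (by simpa using hk)

lemma neg_le_sum_ext {n : ℕ} (f : Fin n → Fin 3) (m : ℕ) :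
    -(n : ℤ) ≤ ∑ k ∈ Finset.range m, ext f k := by
  rcases le_total m n with h | h
  · calc -(n:ℤ) ≤ -(m:ℤ) := by exact_mod_cast neg_le_neg (Int.ofNat_le.mpr h)
      _ = ∑ _k ∈ Finset.range m, (-1 : ℤ) := by simp
      _ ≤ ∑ k ∈ Finset.range m, ext f k := Finset.sum_le_sum fun k _ => neg_one_le_ext f k
  · rw [sum_ext_stable f h]
    calc -(n:ℤ) = ∑ _k ∈ Finset.range n, (-1 : ℤ) := by simp
      _ ≤ ∑ k ∈ Finset.range n, ext f k := Finset.sum_le_sum fun k _ => neg_one_le_ext f k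

/-- Good: never below the axis. -/
def Good {n : ℕ} (f : Fin n → Fin 3) : Prop := ∀ m : ℕ, 0 ≤ ∑ k ∈ Finset.range m, ext f k

/-- Number of nonneg paths of length `i` ending at height `h`. -/
noncomputable def A (i h : ℕ) : ℕ :=
  (Finset.univ.filter (fun f : Fin i → Fin 3 =>
    Good f ∧ ∑ k ∈ Finset.range i, ext f k = (h : ℤ))).card

/-- Number of paths of length `j` starting at height `h` staying nonneg. -/
noncomputable def B (j h : ℕ) : ℕ :=
  (Finset.univ.filter (fun g : Fin j → Fin 3 =>
    ∀ m : ℕ, 0 ≤ (h : ℤ) + ∑ k ∈ Finset.range m, ext g k)).card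

lemma motzkinPrefix_eq (N : ℕ) :
    motzkinPrefix N = (Finset.univ.filter (fun f : Fin N → Fin 3 => Good f)).card := by
  unfold motzkinPrefix
  congr 1
  apply Finset.filter_congr
  intro f _
  constructor
  · intro H m
    rcases le_or_gt m N with h | h
    · have := H m h
      rwa [sum_filter_eq] at this
    · have := H N le_rfl
      rw [sum_filter_eq] at this
      rwa [sum_ext_stable f h.le]
  · intro H m _
    rw [sum_filter_eq]
    exact H m

lemma A_eq_zero {i h : ℕ} (hh : i < h) : A i h = 0 := by
  rw [A, Finset.card_eq_zero, Finset.filter_eq_empty_iff]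
  rintro f - ⟨-, hsum⟩
  have := sum_ext_le f i
  omega

lemma A_diag (i : ℕ) : A i i = 1 := by
  rw [A, Finset.card_eq_one]
  refine ⟨fun _ => 0, ?_⟩
  rw [Finset.eq_singleton_iff_unique_mem]
  constructor
  · refine Finset.mem_filter.mpr ⟨Finset.mem_univ _, ?_, ?_⟩
    · intro m
      refine Finset.sum_nonneg fun k _ => ?_
      unfold ext; split <;> simp
    · have h1 : ∀ k ∈ Finset.range i, ext (fun _ : Fin i => (0 : Fin 3)) k = 1 := by
        intro k hk
        unfold ext
        rw [dif_pos (by simpa using hk)]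
        simp
      rw [Finset.sum_congr rfl h1]
      simp
  · rintro f hf
    obtain ⟨-, -, hsum⟩ := Finset.mem_filter.mp hf
    have hall : ∀ k ∈ Finset.range i, ext f k = 1 := by
      by_contra hc
      push_neg at hc
      obtain ⟨k, hk, hne⟩ := hc
      have hlt : ∑ k ∈ Finset.range i, ext f k < ∑ _k ∈ Finset.range i, (1:ℤ) :=
        Finset.sum_lt_sum (fun k _ => ext_le_one f k)
          ⟨k, hk, lt_of_le_of_ne (ext_le_one f k) hne⟩
      simp at hlt
      omega
    funext k
    have := hall k.1 (Finset.mem_range.mpr k.2)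
    unfold ext at this
    rw [dif_pos k.2] at this
    have hv : ((f ⟨k.1, k.2⟩ : ℕ) : ℤ) = 0 := by omega
    have : (f ⟨k.1, k.2⟩ : ℕ) = 0 := by exact_mod_cast hv
    exact Fin.ext (by simpa using this)


lemma B_of_le {j h : ℕ} (hj : j ≤ h) : B j h = 3 ^ j := by
  rw [B]
  have : (Finset.univ.filter (fun g : Fin j → Fin 3 =>
      ∀ m : ℕ, 0 ≤ (h : ℤ) + ∑ k ∈ Finset.range m, ext g k)) = Finset.univ := by
    refine Finset.filter_true_of_mem fun g _ m => ?_
    have h1 := neg_le_sum_ext g m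
    have h2 : (j : ℤ) ≤ (h : ℤ) := by exact_mod_cast hj
    omega
  rw [this, Finset.card_univ, Fintype.card_fun]
  simp

lemma B_pred (j : ℕ) : B (j + 1) j + 1 = 3 ^ (j + 1) := by
  classical
  rw [B]
  have hsplit := Finset.card_filter_add_card_filter_not
    (s := (Finset.univ : Finset (Fin (j+1) → Fin 3)))
    (p := fun g => ∀ m : ℕ, 0 ≤ (j : ℤ) + ∑ k ∈ Finset.range m, ext g k)
  have hneg : (Finset.univ.filter (fun g : Fin (j+1) → Fin 3 =>
      ¬ ∀ m : ℕ, 0 ≤ (j : ℤ) + ∑ k ∈ Finset.range m, ext g k)) = {fun _ => 2} := by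
    ext g
    simp only [Finset.mem_filter, Finset.mem_univ, true_and, Finset.mem_singleton]
    constructor
    · intro hg
      push_neg at hg
      obtain ⟨m, hm⟩ := hg
      have hlow := neg_le_sum_ext g m
      have hsum : ∑ k ∈ Finset.range m, ext g k = -((j:ℤ) + 1) := by
        push_cast at hlow ⊢
        omega
      have hmge : j + 1 ≤ m := by
        by_contra hc
        push_neg at hc
        have := neg_le_sum_ext (n := m) (fun k : Fin m => g (Fin.castLE hc.le k)) m
        have heq : ∑ k ∈ Finset.range m, ext g k =
            ∑ k ∈ Finset.range m, ext (fun k : Fin m => g (Fin.castLE hc.le k)) k := by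
          refine Finset.sum_congr rfl fun k hk => ?_
          have hk' : k < m := Finset.mem_range.mp hk
          unfold ext
          rw [dif_pos hk', dif_pos (by omega)]
          rfl
        rw [heq] at hsum
        rw [hsum] at this
        push_cast at this
        omega
      rw [sum_ext_stable g hmge] at hsum
      have hall : ∀ k ∈ Finset.range (j+1), ext g k = -1 := by
        by_contra hc
        push_neg at hc
        obtain ⟨k, hk, hne⟩ := hc
        have hlt : ∑ _k ∈ Finset.range (j+1), (-1:ℤ) < ∑ k ∈ Finset.range (j+1), ext g k :=
          Finset.sum_lt_sum (fun k _ => neg_one_le_ext g k)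
            ⟨k, hk, lt_of_le_of_ne (neg_one_le_ext g k) (Ne.symm hne)⟩
        simp at hlt
        omega
      funext k
      have := hall k.1 (Finset.mem_range.mpr k.2)
      unfold ext at this
      rw [dif_pos k.2] at this
      have hv : ((g ⟨k.1, k.2⟩ : ℕ) : ℤ) = 2 := by omega
      have hv2 : (g ⟨k.1, k.2⟩ : ℕ) = 2 := by exact_mod_cast hv
      exact Fin.ext (by simpa using hv2)
    · rintro rfl
      intro hall
      have := hall (j+1)
      have heq : ∑ k ∈ Finset.range (j+1), ext (fun _ : Fin (j+1) => (2:Fin 3)) k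
          = -((j:ℤ)+1) := by
        have h1 : ∀ k ∈ Finset.range (j+1),
            ext (fun _ : Fin (j+1) => (2:Fin 3)) k = -1 := by
          intro k hk
          unfold ext
          rw [dif_pos (Finset.mem_range.mp hk)]
          norm_num
        rw [Finset.sum_congr rfl h1]
        simp
      rw [heq] at this
      omega
  rw [hneg] at hsplit
  simp only [Finset.card_singleton, Finset.card_univ, Fintype.card_fun,
    Fintype.card_fin] at hsplit
  convert hsplit using 2

/-- Column-difference entries. -/
noncomputable def Mdef (j h : ℕ) : ℤ :=
  (B j h : ℤ) - (if h = 0 then 0 else (B j (h - 1) : ℤ))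

lemma sum_Mdef (j h : ℕ) : ∑ k ∈ Finset.range (h + 1), Mdef j k = (B j h : ℤ) := by
  induction h with
  | zero => simp [Mdef]
  | succ t ih =>
      rw [Finset.sum_range_succ, ih, Mdef]
      simp

lemma Mdef_eq_zero {j h : ℕ} (hh : j < h) : Mdef j h = 0 := by
  rw [Mdef, if_neg (by omega), B_of_le (by omega), B_of_le (by omega)]
  ring

lemma Mdef_diag (j : ℕ) : Mdef j j = 1 := by
  rcases Nat.eq_zero_or_pos j with rfl | hj
  · simp [Mdef, B_of_le (le_refl 0)]
  · obtain ⟨t, rfl⟩ := Nat.exists_eq_add_of_lt hj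
    simp only [Nat.zero_add] at *
    rw [Mdef, if_neg (by omega)]
    have h1 := B_pred t
    have h2 : B (t+1) (t+1) = 3 ^ (t+1) := B_of_le le_rfl
    have : t + 1 - 1 = t := by omega
    rw [this, h2]
    push_cast [← h1]
    ring


/-- Concatenation of two paths. -/
def glue {i j : ℕ} (p : Fin i → Fin 3) (q : Fin j → Fin 3) : Fin (i + j) → Fin 3 :=
  fun k => if h : k.1 < i then p ⟨k.1, h⟩ else q ⟨k.1 - i, by omega⟩

lemma ext_glue {i j : ℕ} (p : Fin i → Fin 3) (q : Fin j → Fin 3) (k : ℕ) :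
    ext (glue p q) k = if k < i then ext p k else ext q (k - i) := by
  unfold ext glue
  rcases lt_or_ge k i with hk | hk
  · have h1 : k < i + j := by omega
    simp only [dif_pos h1, if_pos hk, dif_pos hk]
  · rw [if_neg (by omega)]
    rcases lt_or_ge k (i + j) with hk2 | hk2
    · have h2 : ¬ k < i := by omega
      have h3 : k - i < j := by omega
      simp only [dif_pos hk2, dif_neg h2, dif_pos h3]
    · have h3 : ¬ k - i < j := by omega
      simp only [dif_neg (by omega : ¬ k < i + j), dif_neg h3]

lemma sum_ext_glue_left {i j : ℕ} (p : Fin i → Fin 3) (q : Fin j → Fin 3) {m : ℕ}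
    (hm : m ≤ i) :
    ∑ k ∈ Finset.range m, ext (glue p q) k = ∑ k ∈ Finset.range m, ext p k := by
  refine Finset.sum_congr rfl fun k hk => ?_
  rw [ext_glue, if_pos (by have := Finset.mem_range.mp hk; omega)]

lemma sum_ext_glue_add {i j : ℕ} (p : Fin i → Fin 3) (q : Fin j → Fin 3) (t : ℕ) :
    ∑ k ∈ Finset.range (i + t), ext (glue p q) k =
      ∑ k ∈ Finset.range i, ext p k + ∑ k ∈ Finset.range t, ext q k := by
  rw [Finset.sum_range_add, sum_ext_glue_left p q le_rfl]
  congr 1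
  refine Finset.sum_congr rfl fun k _ => ?_
  rw [ext_glue, if_neg (by omega)]
  congr 1
  omega

lemma glue_decomp {i j : ℕ} (f : Fin (i + j) → Fin 3) :
    glue (fun k => f (Fin.castAdd j k)) (fun k => f (Fin.natAdd i k)) = f := by
  funext k
  unfold glue
  rcases lt_or_ge k.1 i with hk | hk
  · rw [dif_pos hk]
    exact congrArg f (Fin.ext rfl)
  · rw [dif_neg (by omega)]
    exact congrArg f (Fin.ext (by simp [Fin.natAdd]; omega))

lemma split (i j n : ℕ) (hi : i < n) :
    motzkinPrefix (i + j) = ∑ h ∈ Finset.range n, A i h * B j h := by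
  rw [motzkinPrefix_eq]
  rw [Finset.card_eq_sum_card_fiberwise
    (f := fun f : Fin (i+j) → Fin 3 => (∑ k ∈ Finset.range i, ext f k).toNat)
    (t := Finset.range n) ?_]
  · refine Finset.sum_congr rfl fun h _ => ?_
    rw [A, B, ← Finset.card_product]
    refine Finset.card_bij'
      (fun f _ => (fun k => f (Fin.castAdd j k), fun k => f (Fin.natAdd i k)))
      (fun pq _ => glue pq.1 pq.2) ?_ ?_ ?_ ?_
    · -- forward membership
      intro f hf
      simp only [Finset.mem_filter, Finset.mem_univ, true_and] at hf
      obtain ⟨hgood, hkey⟩ := hf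
      set p := fun k => f (Fin.castAdd j k) with hp
      set q := fun k => f (Fin.natAdd i k) with hq
      have hfg : glue p q = f := glue_decomp f
      have hsum_eq : ∀ m ≤ i, ∑ k ∈ Finset.range m, ext f k =
          ∑ k ∈ Finset.range m, ext p k := by
        intro m hm
        rw [← hfg, sum_ext_glue_left p q hm]
      have hendpoint : ∑ k ∈ Finset.range i, ext p k = (h : ℤ) := by
        rw [← hsum_eq i le_rfl]
        have h0 := hgood i
        omega
      simp only [Finset.mem_product, Finset.mem_filter, Finset.mem_univ, true_and]
      refine ⟨⟨?_, hendpoint⟩, ?_⟩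
      · intro m
        rcases le_total m i with hm | hm
        · rw [← hsum_eq m hm]; exact hgood m
        · rw [sum_ext_stable p hm, hendpoint]; positivity
      · intro m
        have := hgood (i + m)
        rw [← hfg, sum_ext_glue_add p q m, hendpoint] at this
        exact this
    · -- backward membership
      rintro ⟨p, q⟩ hpq
      simp only [Finset.mem_product, Finset.mem_filter, Finset.mem_univ, true_and] at hpq
      obtain ⟨⟨hgoodp, hendp⟩, hq⟩ := hpq
      simp only [Finset.mem_filter, Finset.mem_univ, true_and]
      have hgood : Good (glue p q) := by
        intro m
        rcases le_total m i with hm | hm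
        · rw [sum_ext_glue_left p q hm]; exact hgoodp m
        · have : m = i + (m - i) := by omega
          rw [this, sum_ext_glue_add p q (m - i), hendp]
          exact hq (m - i)
      refine ⟨hgood, ?_⟩
      rw [sum_ext_glue_left p q le_rfl, hendp]
      simp
    · intro f hf
      exact glue_decomp f
    · rintro ⟨p, q⟩ hpq
      simp only [Prod.mk.injEq]
      constructor
      · funext k
        unfold glue
        rw [dif_pos (by simpa using k.2)]
        exact congrArg p (Fin.ext rfl)
      · funext k
        unfold glue
        rw [dif_neg (by simp [Fin.natAdd])]
        exact congrArg q (Fin.ext (by simp [Fin.natAdd]))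
  · intro f hf
    simp only [Finset.mem_coe, Finset.mem_filter, Finset.mem_univ, true_and] at hf
    have h0 := hf i
    have h1 := sum_ext_le f i
    simp only [Finset.mem_coe, Finset.mem_range]
    omega


lemma sum_T_M (n j : ℕ) (h : Fin n) :
    ∑ h' : Fin n, (if (h' : ℕ) ≤ (h : ℕ) then Mdef j h'.1 else 0) = (B j h.1 : ℤ) := by
  rw [Fin.sum_univ_eq_sum_range (fun k => if k ≤ (h : ℕ) then Mdef j k else 0) n]
  rw [← sum_Mdef j h.1]
  have hsub : Finset.range (h.1 + 1) ⊆ Finset.range n :=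
    Finset.range_subset_range.mpr (by have := h.2; omega)
  have h1 : ∑ k ∈ Finset.range n, (if k ≤ (h : ℕ) then Mdef j k else 0) =
      ∑ k ∈ Finset.range (h.1 + 1), (if k ≤ (h : ℕ) then Mdef j k else 0) := by
    refine (Finset.sum_subset hsub ?_).symm
    intro k _ hk
    rw [if_neg (by simp at hk; omega)]
  rw [h1]
  refine Finset.sum_congr rfl fun k hk => ?_
  rw [if_pos (by have := Finset.mem_range.mp hk; omega)]

end MPaux


open MPaux

theorem motzkinPrefix_hankel_det (n : ℕ) (hn : 0 < n) :
    (Matrix.of fun i j : Fin n => (motzkinPrefix (i.1 + j.1) : ℤ)).det = 1 := by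
  classical
  set L : Matrix (Fin n) (Fin n) ℤ := Matrix.of fun i h => (A i.1 h.1 : ℤ) with hL
  set T : Matrix (Fin n) (Fin n) ℤ := Matrix.of fun h h' => if (h' : ℕ) ≤ (h : ℕ) then 1 else 0 with hT
  set Mm : Matrix (Fin n) (Fin n) ℤ := Matrix.of fun j h' => Mdef j.1 h'.1 with hM
  have hfact : (Matrix.of fun i j : Fin n => (motzkinPrefix (i.1 + j.1) : ℤ)) =
      L * (T * Mm.transpose) := by
    ext i j
    have hTM : (T * Mm.transpose) = Matrix.of fun h j => (B j.1 h.1 : ℤ) := by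
      ext h j
      simp only [Matrix.mul_apply, Matrix.transpose_apply, hT, hM, Matrix.of_apply,
        ite_mul, one_mul, zero_mul]
      exact sum_T_M n j.1 h
    rw [hTM]
    simp only [Matrix.mul_apply, hL, Matrix.of_apply]
    rw [split i.1 j.1 n i.2]
    rw [← Fin.sum_univ_eq_sum_range (fun h => A i.1 h * B j.1 h) n]
    push_cast
    rfl
  rw [hfact, Matrix.det_mul, Matrix.det_mul, Matrix.det_transpose]
  have hdetL : L.det = 1 := by
    rw [Matrix.det_of_lowerTriangular L (fun i h hlt => ?_)]
    · rw [Finset.prod_congr rfl (fun i _ => ?_), Finset.prod_const_one]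
      show ((A i.1 i.1 : ℕ) : ℤ) = 1
      rw [A_diag]; rfl
    · have h2 : i < h := hlt
      show ((A i.1 h.1 : ℕ) : ℤ) = 0
      rw [A_eq_zero (show i.1 < h.1 from h2)]; rfl
  have hdetT : T.det = 1 := by
    rw [Matrix.det_of_lowerTriangular T (fun h h' hlt => ?_)]
    · rw [Finset.prod_congr rfl (fun h _ => ?_), Finset.prod_const_one]
      show (if (h : ℕ) ≤ (h : ℕ) then (1:ℤ) else 0) = 1
      simp
    · have h2 : h < h' := hlt
      show (if (h' : ℕ) ≤ (h : ℕ) then (1:ℤ) else 0) = 0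
      rw [if_neg (by have := (Fin.lt_def.mp h2); omega)]
  have hdetM : Mm.det = 1 := by
    rw [Matrix.det_of_lowerTriangular Mm (fun j h' hlt => ?_)]
    · rw [Finset.prod_congr rfl (fun j _ => ?_), Finset.prod_const_one]
      exact Mdef_diag j.1
    · have h2 : j < h' := hlt
      exact Mdef_eq_zero (show j.1 < h'.1 from h2)
  rw [hdetL, hdetT, hdetM]
  ring
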